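/- Let m = 2 and 0 < α_1 < α_2 < 1 with α_1 + α_2 < 1. There exists a joint distribution of (p_1, p_2) with both marginals uniform on [0,1] such that the step-up test with critical values α_1, α_2 (both hypotheses true) satisfies FDR = α_1 + α_2. The construction: p_1 is uniform on [0,1], and given p_1 = x, p_2 is uniform on (1−α_1, 1] if x ≤ α_1, uniform on (α_1, α_2] if α_1 < x ≤ α_2, and uniform on (0, α_1] ∪ (α_2, 1−α_1] if x > α_2. -/

import Mathlib

open MeasureTheory ProbabilityTheory Finset
open scoped Classical
noncomputable section

/-- `#{i : p i ≤ t}`, i.e. `m·F̂_m(t)`. -/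
def countLE {m : ℕ} (p : Fin m → ℝ) (t : ℝ) : ℕ :=
  (Finset.univ.filter (fun i => p i ≤ t)).card

/-- The `i`-th order statistic `p_{i:m}` (for `1 ≤ i ≤ m`), characterized by
`p_{i:m} ≤ t ↔ i ≤ #{k : p k ≤ t}`. -/
def orderStat {m : ℕ} (p : Fin m → ℝ) (i : ℕ) : ℝ :=
  sInf {t | i ≤ countLE p t}

/-- Step-up rejection number `R = max {j : p_{j:m} ≤ α_j}` (`max ∅ = 0`). -/
def suR {m : ℕ} (α : ℕ → ℝ) (p : Fin m → ℝ) : ℕ :=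
  WithBot.unbotD 0 (((Finset.range (m+1)).filter (fun j => 1 ≤ j ∧ orderStat p j ≤ α j)).max)

/-- Step-down rejection number `R = max {j : p_{i:m} ≤ α_i for all i ≤ j}`. -/
def sdR {m : ℕ} (α : ℕ → ℝ) (p : Fin m → ℝ) : ℕ :=
  WithBot.unbotD 0 (((Finset.range (m+1)).filter
    (fun j => ∀ i ∈ Finset.Icc 1 j, orderStat p i ≤ α i)).max)

/-- FDR `= E[V / max(R,1)]` for rejection number `R` and rejection rule `rej`. -/
def FDR {Ω : Type*} [MeasurableSpace Ω] (μ : Measure Ω) {m : ℕ}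
    (p : Ω → Fin m → ℝ) (I0 : Finset (Fin m))
    (R : (Fin m → ℝ) → ℕ) (rej : (Fin m → ℝ) → Fin m → Prop) : ℝ :=
  ∫ ω, ((I0.filter (fun i => rej (p ω) i)).card : ℝ) / (max (R (p ω)) 1 : ℕ) ∂μ

/-- FDR of the step-up test with critical values `α`. -/
def suFDR {Ω : Type*} [MeasurableSpace Ω] (μ : Measure Ω) {m : ℕ}
    (α : ℕ → ℝ) (p : Ω → Fin m → ℝ) (I0 : Finset (Fin m)) : ℝ :=
  FDR μ p I0 (suR α) (fun q i => q i ≤ α (suR α q))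

/-- FDR of the step-down test with critical values `α`
(rejecting the hypotheses belonging to `p_{i:m}`, `i ≤ R`). -/
def sdFDR {Ω : Type*} [MeasurableSpace Ω] (μ : Measure Ω) {m : ℕ}
    (α : ℕ → ℝ) (p : Ω → Fin m → ℝ) (I0 : Finset (Fin m)) : ℝ :=
  FDR μ p I0 (sdR α) (fun q i => 1 ≤ sdR α q ∧ q i ≤ orderStat q (sdR α q))

/-- Benjamini–Hochberg critical values `b_j = jα/m`. -/
def bh (m : ℕ) (α : ℝ) (j : ℕ) : ℝ := j * α / m

/-- The uniform distribution on `[0,1]`. -/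
def unif01 : Measure ℝ := volume.restrict (Set.Icc 0 1)

lemma countLE_two (q : Fin 2 → ℝ) (t : ℝ) :
    countLE q t = (if q 0 ≤ t then 1 else 0) + (if q 1 ≤ t then 1 else 0) := by
  rw [countLE, Finset.card_filter, Fin.sum_univ_two]

lemma orderStat_two_one (q : Fin 2 → ℝ) : orderStat q 1 = min (q 0) (q 1) := by
  have h : {t | 1 ≤ countLE q t} = Set.Ici (min (q 0) (q 1)) := by
    ext t
    simp only [Set.mem_setOf_eq, countLE_two, Set.mem_Ici, min_le_iff]
    split_ifs <;> simp_all
  rw [orderStat, h, csInf_Ici]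

lemma orderStat_two_two (q : Fin 2 → ℝ) : orderStat q 2 = max (q 0) (q 1) := by
  have h : {t | 2 ≤ countLE q t} = Set.Ici (max (q 0) (q 1)) := by
    ext t
    simp only [Set.mem_setOf_eq, countLE_two, Set.mem_Ici, max_le_iff]
    split_ifs <;> simp_all
  rw [orderStat, h, csInf_Ici]

lemma max_unbot'_eq (s : Finset ℕ) (n : ℕ) (hn : n ∈ s) (hb : ∀ a ∈ s, a ≤ n) :
    WithBot.unbotD 0 s.max = n := by
  have h1 : s.max = (n : WithBot ℕ) :=
    le_antisymm (Finset.max_le (fun a ha => WithBot.coe_le_coe.2 (hb a ha))) (Finset.le_max hn)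
  rw [h1]; rfl

lemma suR_two (a1 a2 : ℝ) (q : Fin 2 → ℝ) :
    suR (fun j => if j = 0 then 0 else if j = 1 then a1 else a2) q =
      if max (q 0) (q 1) ≤ a2 then 2 else if min (q 0) (q 1) ≤ a1 then 1 else 0 := by
  set α : ℕ → ℝ := fun j => if j = 0 then 0 else if j = 1 then a1 else a2 with hα
  have hmem : ∀ j, j ∈ (Finset.range 3).filter (fun j => 1 ≤ j ∧ orderStat q j ≤ α j) ↔
      (j = 1 ∧ min (q 0) (q 1) ≤ a1) ∨ (j = 2 ∧ max (q 0) (q 1) ≤ a2) := by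
    intro j
    simp only [Finset.mem_filter, Finset.mem_range]
    constructor
    · rintro ⟨hj3, hj1, hle⟩
      interval_cases j
      · left; exact ⟨rfl, by rw [orderStat_two_one] at hle; simpa [hα] using hle⟩
      · right; exact ⟨rfl, by rw [orderStat_two_two] at hle; simpa [hα] using hle⟩
    · rintro (⟨rfl, h⟩ | ⟨rfl, h⟩)
      · exact ⟨by omega, le_refl 1, by rw [orderStat_two_one]; simpa [hα] using h⟩
      · exact ⟨by omega, by omega, by rw [orderStat_two_two]; simpa [hα] using h⟩
  unfold suR
  split_ifs with h2 h1
  · exact max_unbot'_eq _ 2 ((hmem 2).2 (Or.inr ⟨rfl, h2⟩)) (fun a ha => by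
      rcases (hmem a).1 ha with ⟨rfl, _⟩ | ⟨rfl, _⟩ <;> omega)
  · exact max_unbot'_eq _ 1 ((hmem 1).2 (Or.inl ⟨rfl, h1⟩)) (fun a ha => by
      rcases (hmem a).1 ha with ⟨rfl, _⟩ | ⟨rfl, h⟩ <;> [omega; exact absurd h h2])
  · have he : (Finset.range 3).filter (fun j => 1 ≤ j ∧ orderStat q j ≤ α j) = ∅ := by
      apply Finset.eq_empty_iff_forall_notMem.2
      intro j hj
      rcases (hmem j).1 hj with ⟨rfl, h⟩ | ⟨rfl, h⟩
      · exact h1 h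
      · exact h2 h
    rw [he, Finset.max_empty]; rfl

def sharpF (a1 a2 x : ℝ) : ℝ :=
  if x ≤ a1 then x + (1 - a1) else if x ≤ a2 then x else if x ≤ a2 + a1 then x - a2 else x - a1

lemma sharpF_measurable (a1 a2 : ℝ) : Measurable (sharpF a1 a2) := by
  unfold sharpF
  refine Measurable.ite (measurableSet_le measurable_id measurable_const) (by measurability) ?_
  refine Measurable.ite (measurableSet_le measurable_id measurable_const) (by measurability) ?_
  exact Measurable.ite (measurableSet_le measurable_id measurable_const) (by measurability) (by measurability)

lemma restrict_Ioc_split (a b c : ℝ) (h1 : a ≤ b) (h2 : b ≤ c) :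
    volume.restrict (Set.Ioc a c) = volume.restrict (Set.Ioc a b) + volume.restrict (Set.Ioc b c) := by
  rw [← Set.Ioc_union_Ioc_eq_Ioc h1 h2,
    Measure.restrict_union (Set.Ioc_disjoint_Ioc_of_le le_rfl) measurableSet_Ioc]

lemma map_add_restrict_Ioc (c a b : ℝ) :
    Measure.map (fun x => x + c) (volume.restrict (Set.Ioc a b))
      = volume.restrict (Set.Ioc (a + c) (b + c)) := by
  have hpre : Set.Ioc a b = (fun x => x + c) ⁻¹' Set.Ioc (a + c) (b + c) := by
    ext x; simp only [Set.mem_preimage, Set.mem_Ioc]; constructor <;> intro h <;>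
      exact ⟨by linarith [h.1], by linarith [h.2]⟩
  rw [hpre, ← Measure.restrict_map (measurable_add_const c) measurableSet_Ioc,
    (measurePreserving_add_right volume c).map_eq]

lemma sharpF_map (a1 a2 : ℝ) (ha1 : 0 < a1) (h12 : a1 < a2) (ha2 : a2 < 1) (hsum : a1 + a2 < 1) :
    Measure.map (sharpF a1 a2) unif01 = unif01 := by
  have key : ∀ (a b c : ℝ), (∀ x ∈ Set.Ioc a b, sharpF a1 a2 x = x + c) →
      Measure.map (sharpF a1 a2) (volume.restrict (Set.Ioc a b))
        = volume.restrict (Set.Ioc (a + c) (b + c)) := by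
    intro a b c h
    rw [Measure.map_congr ((ae_restrict_iff' measurableSet_Ioc).2
      (Filter.Eventually.of_forall (fun x hx => h x hx))), map_add_restrict_Ioc]
  have hIcc : unif01 = volume.restrict (Set.Ioc 0 1) :=
    (Measure.restrict_congr_set Ioc_ae_eq_Icc).symm
  rw [hIcc]
  rw [restrict_Ioc_split 0 (a2 + a1) 1 (by linarith) (by linarith),
      restrict_Ioc_split 0 a2 (a2 + a1) (by linarith) (by linarith),
      restrict_Ioc_split 0 a1 a2 (by linarith) (by linarith)]
  rw [Measure.map_add _ _ (sharpF_measurable a1 a2), Measure.map_add _ _ (sharpF_measurable a1 a2),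
      Measure.map_add _ _ (sharpF_measurable a1 a2)]
  rw [key 0 a1 (1 - a1) (fun x hx => by simp [sharpF, hx.2]),
      key a1 a2 0 (fun x hx => by
        simp only [sharpF, if_neg (not_le.2 hx.1)]
        rw [if_pos hx.2]; ring),
      key a2 (a2 + a1) (-a2) (fun x hx => by
        have h1 : ¬ x ≤ a1 := not_le.2 (lt_trans h12 hx.1)
        have h2 : ¬ x ≤ a2 := not_le.2 hx.1
        simp only [sharpF, if_neg h1, if_neg h2, if_pos hx.2]; ring),
      key (a2 + a1) 1 (-a1) (fun x hx => by
        have h1 : ¬ x ≤ a1 := not_le.2 (by linarith [hx.1])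
        have h2 : ¬ x ≤ a2 := not_le.2 (by linarith [hx.1])
        have h3 : ¬ x ≤ a2 + a1 := not_le.2 hx.1
        simp only [sharpF, if_neg h1, if_neg h2, if_neg h3]; ring)]
  have e1 : (0 : ℝ) + (1 - a1) = 1 - a1 := by ring
  have e2 : a1 + (1 - a1) = 1 := by ring
  have e3 : a1 + 0 = a1 := by ring
  have e4 : a2 + 0 = a2 := by ring
  have e5 : a2 + -a2 = 0 := by ring
  have e6 : a2 + a1 + -a2 = a1 := by ring
  have e7 : a2 + a1 + -a1 = a2 := by ring
  have e8 : (1 : ℝ) + -a1 = 1 - a1 := by ring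
  rw [e1, e2, e3, e4, e5, e6, e7, e8]
  have hL : volume.restrict (Set.Ioc (1-a1) 1) + volume.restrict (Set.Ioc a1 a2)
      + volume.restrict (Set.Ioc 0 a1) + volume.restrict (Set.Ioc a2 (1-a1))
      = volume.restrict (Set.Ioc (0:ℝ) 1) := by
    rw [restrict_Ioc_split 0 (1 - a1) 1 (by linarith) (by linarith),
      restrict_Ioc_split 0 a2 (1 - a1) (by linarith) (by linarith),
      restrict_Ioc_split 0 a1 a2 (by linarith) (by linarith)]
    abel
  have hR : volume.restrict (Set.Ioc (0:ℝ) a1) + volume.restrict (Set.Ioc a1 a2)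
      + volume.restrict (Set.Ioc a2 (a2+a1)) + volume.restrict (Set.Ioc (a2+a1) 1)
      = volume.restrict (Set.Ioc (0:ℝ) 1) := by
    rw [restrict_Ioc_split 0 (a2 + a1) 1 (by linarith) (by linarith),
      restrict_Ioc_split 0 a2 (a2 + a1) (by linarith) (by linarith),
      restrict_Ioc_split 0 a1 a2 (by linarith) (by linarith)]
  rw [hL, hR]

lemma sharpF_def (a1 a2 x : ℝ) : sharpF a1 a2 x =
    if x ≤ a1 then x + (1 - a1) else if x ≤ a2 then x
    else if x ≤ a2 + a1 then x - a2 else x - a1 := rfl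

/-- Sharpness of the two-dimensional step-up bound: if
`0 < α₁ < α₂ < 1` and `α₁ + α₂ < 1`, there is a joint distribution of
`(p₁, p₂)` with uniform `[0,1]` marginals (both nulls true) for which the
step-up test with critical values `α₁, α₂` has `FDR = α₁ + α₂`. -/
theorem su_two_dependent_bound_sharp
    (a1 a2 : ℝ) (ha1 : 0 < a1) (h12 : a1 < a2) (ha2 : a2 < 1) (hsum : a1 + a2 < 1) :
    ∃ (Ω : Type) (_ : MeasurableSpace Ω) (μ : Measure Ω) (_ : IsProbabilityMeasure μ)
      (p : Ω → Fin 2 → ℝ),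
      (∀ i, Measurable (fun ω => p ω i)) ∧
      -- uniform [0,1] marginals
      (∀ i : Fin 2, Measure.map (fun ω => p ω i) μ = unif01) ∧
      suFDR μ (fun j => if j = 0 then 0 else if j = 1 then a1 else a2) p Finset.univ
        = a1 + a2 := by
  set α : ℕ → ℝ := fun j => if j = 0 then 0 else if j = 1 then a1 else a2 with hα
  refine ⟨ℝ, inferInstance, unif01, ⟨by simp [unif01, Real.volume_Icc]⟩,
    fun ω => ![ω, sharpF a1 a2 ω], ?_, ?_, ?_⟩
  · intro i
    fin_cases i
    · exact measurable_id
    · simpa using sharpF_measurable a1 a2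
  · intro i
    fin_cases i
    · simpa using Measure.map_id
    · simpa using sharpF_map a1 a2 ha1 h12 ha2 hsum
  · rw [suFDR, FDR]
    have heq : Set.EqOn
        (fun ω => ((Finset.univ.filter
            (fun i => ![ω, sharpF a1 a2 ω] i ≤ α (suR α ![ω, sharpF a1 a2 ω]))).card : ℝ)
          / ((max (suR α ![ω, sharpF a1 a2 ω]) 1 : ℕ) : ℝ))
        (Set.indicator (Set.Icc (0:ℝ) (a1+a2)) (fun _ => (1:ℝ))) (Set.Icc 0 1) := by
      intro x hx
      obtain ⟨hx0, hx1⟩ := hx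
      simp only
      rcases le_or_gt x a1 with h | h
      · -- region 1
        have hf : sharpF a1 a2 x = x + (1 - a1) := by rw [sharpF_def, if_pos h]
        have hsu : suR α ![x, sharpF a1 a2 x] = 1 := by
          rw [hα, suR_two]
          simp only [Matrix.cons_val_zero, Matrix.cons_val_one, Matrix.head_cons, hf]
          rw [if_neg (fun hc => by
              have := le_trans (le_max_right x (x + (1 - a1))) hc; linarith),
            if_pos (le_trans (min_le_left _ _) h)]
        rw [hsu]
        have hα1 : α 1 = a1 := by norm_num [hα]
        rw [Finset.card_filter, Fin.sum_univ_two]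
        simp only [Matrix.cons_val_zero, Matrix.cons_val_one, Matrix.head_cons, hα1, hf]
        rw [if_pos h, if_neg (by intro hc; linarith)]
        rw [Set.indicator_of_mem (show x ∈ Set.Icc (0:ℝ) (a1+a2) from ⟨hx0, by linarith⟩)]
        norm_num
      · rcases le_or_gt x a2 with h2 | h2
        · -- region 2
          have hf : sharpF a1 a2 x = x := by
            rw [sharpF_def, if_neg (not_le.2 h), if_pos h2]
          have hsu : suR α ![x, sharpF a1 a2 x] = 2 := by
            rw [hα, suR_two]
            simp only [Matrix.cons_val_zero, Matrix.cons_val_one, Matrix.head_cons, hf,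
              max_self, min_self]
            rw [if_pos h2]
          rw [hsu]
          have hα2 : α 2 = a2 := by norm_num [hα]
          rw [Finset.card_filter, Fin.sum_univ_two]
          simp only [Matrix.cons_val_zero, Matrix.cons_val_one, Matrix.head_cons, hα2, hf]
          rw [if_pos h2]
          rw [Set.indicator_of_mem (show x ∈ Set.Icc (0:ℝ) (a1+a2) from ⟨hx0, by linarith⟩)]
          norm_num
        · rcases le_or_gt x (a2 + a1) with h3 | h3
          · -- region 3
            have hf : sharpF a1 a2 x = x - a2 := by
              rw [sharpF_def, if_neg (not_le.2 (lt_trans h12 h2)), if_neg (not_le.2 h2), if_pos h3]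
            have hsu : suR α ![x, sharpF a1 a2 x] = 1 := by
              rw [hα, suR_two]
              simp only [Matrix.cons_val_zero, Matrix.cons_val_one, Matrix.head_cons, hf]
              rw [if_neg (fun hc => by
                  have := le_trans (le_max_left x (x - a2)) hc; linarith),
                if_pos (le_trans (min_le_right _ _) (by linarith))]
            rw [hsu]
            have hα1 : α 1 = a1 := by norm_num [hα]
            rw [Finset.card_filter, Fin.sum_univ_two]
            simp only [Matrix.cons_val_zero, Matrix.cons_val_one, Matrix.head_cons, hα1, hf]
            rw [if_neg (by intro hc; linarith), if_pos (by linarith)]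
            rw [Set.indicator_of_mem (show x ∈ Set.Icc (0:ℝ) (a1+a2) from ⟨hx0, by linarith⟩)]
            norm_num
          · -- region 4
            have hf : sharpF a1 a2 x = x - a1 := by
              rw [sharpF_def, if_neg (not_le.2 (lt_trans h12 h2)), if_neg (not_le.2 h2),
                if_neg (not_le.2 h3)]
            have hsu : suR α ![x, sharpF a1 a2 x] = 0 := by
              rw [hα, suR_two]
              simp only [Matrix.cons_val_zero, Matrix.cons_val_one, Matrix.head_cons, hf]
              rw [if_neg (fun hc => by
                  have := le_trans (le_max_left x (x - a1)) hc; linarith),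
                if_neg (fun hc => by
                  have h5 : min x (x - a1) = x - a1 := min_eq_right (by linarith)
                  rw [h5] at hc; linarith)]
            rw [hsu]
            have hα0 : α 0 = 0 := by norm_num [hα]
            rw [Finset.card_filter, Fin.sum_univ_two]
            simp only [Matrix.cons_val_zero, Matrix.cons_val_one, Matrix.head_cons, hα0, hf]
            rw [if_neg (by intro hc; linarith), if_neg (by intro hc; linarith)]
            rw [Set.indicator_of_notMem (show x ∉ Set.Icc (0:ℝ) (a1+a2) from fun hc => by
              obtain ⟨_, hcc⟩ := hc; linarith)]
            norm_num
    rw [show unif01 = volume.restrict (Set.Icc (0:ℝ) 1) from rfl]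
    rw [setIntegral_congr_fun measurableSet_Icc heq]
    rw [integral_indicator_const (1:ℝ) measurableSet_Icc]
    rw [measureReal_def, Measure.restrict_apply measurableSet_Icc,
      Set.inter_eq_self_of_subset_left (Set.Icc_subset_Icc le_rfl hsum.le),
      Real.volume_Icc, ENNReal.toReal_ofReal (by linarith), smul_eq_mul]
    ring
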